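/- For every function α of class K∞ there exists a function ρ of class K∞ such that ρ(s) ≤ α(s) for all s ≥ 0 and ρ is globally Lipschitz with Lipschitz constant 1, i.e. |ρ(s₁) - ρ(s₂)| ≤ |s₁ - s₂| for all s₁, s₂ ≥ 0. -/

import Mathlib

open Filter Set

/-- Class `K` comparison functions on `[0,∞)`. -/
def ClassK (f : ℝ → ℝ) : Prop :=
  ContinuousOn f (Ici 0) ∧ StrictMonoOn f (Ici 0) ∧ f 0 = 0 ∧ ∀ r, 0 ≤ r → 0 ≤ f r

/-- Class `K∞` comparison functions. -/
def ClassKInf (f : ℝ → ℝ) : Prop :=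
  ClassK f ∧ ∀ M : ℝ, ∃ r, 0 ≤ r ∧ M < f r

/-- Class `KL` comparison functions. -/
def ClassKL (β : ℝ → ℝ → ℝ) : Prop :=
  (∀ t, 0 ≤ t → ClassK (fun r => β r t)) ∧
  ∀ r, 0 < r → ContinuousOn (β r) (Ici 0) ∧ AntitoneOn (β r) (Ici 0) ∧
    Tendsto (β r) atTop (nhds 0)

/-- Right-hand lower Dini derivative. -/
noncomputable def dini (f : ℝ → ℝ) (t : ℝ) : ℝ :=
  liminf (fun τ => (f (t + τ) - f t) / τ) (nhdsWithin 0 (Ioi 0))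

/-- For every `α ∈ K∞` there is `ρ ∈ K∞` below `α` with unit Lipschitz constant. -/
theorem exists_lipschitz_classKInf_lower_bound (α : ℝ → ℝ) (hα : ClassKInf α) :
    ∃ ρ : ℝ → ℝ, ClassKInf ρ ∧ (∀ s, 0 ≤ s → ρ s ≤ α s) ∧
      ∀ s₁ s₂, 0 ≤ s₁ → 0 ≤ s₂ → |ρ s₁ - ρ s₂| ≤ |s₁ - s₂| := by
  obtain ⟨⟨hcont, hmono, h0, hpos⟩, hunb⟩ := hα
  set h : ℝ → ℝ := fun t => α t - t with hh
  set g : ℝ → ℝ := fun s => sInf (h '' Icc 0 s) with hg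
  set ρ : ℝ → ℝ := fun s => s + g s with hρ
  have hne : ∀ s : ℝ, 0 ≤ s → (h '' Icc 0 s).Nonempty := fun s hs =>
    ⟨h 0, mem_image_of_mem h (by simp [hs])⟩
  have hbdd : ∀ s : ℝ, 0 ≤ s → BddBelow (h '' Icc 0 s) := by
    intro s hs
    refine ⟨-s, ?_⟩
    rintro x ⟨t, ht, rfl⟩
    have := hpos t ht.1
    simp only [hh]
    linarith [ht.2]
  have A : ∀ s t : ℝ, 0 ≤ t → t ≤ s → g s ≤ h t := by
    intro s t ht hts
    exact csInf_le (hbdd s (ht.trans hts)) (mem_image_of_mem h ⟨ht, hts⟩)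
  have B : ∀ s c : ℝ, 0 ≤ s → (∀ t, 0 ≤ t → t ≤ s → c ≤ h t) → c ≤ g s := by
    intro s c hs hc
    refine le_csInf (hne s hs) ?_
    rintro x ⟨t, ht, rfl⟩
    exact hc t ht.1 ht.2
  -- monotonicity of g : antitone
  have C : ∀ s₁ s₂ : ℝ, 0 ≤ s₁ → s₁ ≤ s₂ → g s₂ ≤ g s₁ := by
    intro s₁ s₂ h1 h12
    refine csInf_le_csInf (hbdd s₂ (h1.trans h12)) (hne s₁ h1) ?_
    exact image_mono (Icc_subset_Icc le_rfl h12)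
  have D : ∀ s₁ s₂ : ℝ, 0 ≤ s₁ → s₁ ≤ s₂ → g s₁ - (s₂ - s₁) ≤ g s₂ := by
    intro s₁ s₂ h1 h12
    refine B s₂ _ (h1.trans h12) ?_
    intro t ht hts
    rcases le_or_gt t s₁ with htc | htc
    · have := A s₁ t ht htc
      linarith
    · have h1' : α s₁ ≤ α t := (hmono.monotoneOn h1 (h1.trans htc.le) htc.le)
      have h2' : g s₁ ≤ h s₁ := A s₁ s₁ h1 le_rfl
      simp only [hh] at h2' ⊢
      linarith
  -- continuity of h on Ici 0
  have hcont' : ContinuousOn h (Ici 0) := hcont.sub continuousOn_id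
  -- attainment & strict increase of ρ
  have E : ∀ s₁ s₂ : ℝ, 0 ≤ s₁ → s₁ < s₂ → g s₁ - (s₂ - s₁) < g s₂ := by
    intro s₁ s₂ h1 h12
    have h2 : (0:ℝ) ≤ s₂ := h1.trans h12.le
    obtain ⟨t, htmem, htmin⟩ := isCompact_Icc.exists_isMinOn ⟨0, by simp [h2]⟩
      (hcont'.mono (Icc_subset_Ici_self : Icc (0:ℝ) s₂ ⊆ Ici 0))
    have hgt : g s₂ = h t := by
      refine le_antisymm (A s₂ t htmem.1 htmem.2) ?_
      exact B s₂ _ h2 fun u hu hus => htmin ⟨hu, hus⟩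
    rw [hgt]
    rcases le_or_gt t s₁ with htc | htc
    · have := A s₁ t htmem.1 htc
      linarith
    · have h1' : α s₁ < α t := hmono h1 (h1.trans htc.le) htc
      have h2' : g s₁ ≤ h s₁ := A s₁ s₁ h1 le_rfl
      simp only [hh] at h2' ⊢
      linarith [htmem.2]
  -- basic bounds
  have hg0 : ∀ s : ℝ, 0 ≤ s → -s ≤ g s := by
    intro s hs
    refine B s _ hs fun t ht hts => ?_
    have := hpos t ht
    simp only [hh]; linarith
  have hρ0 : ∀ s : ℝ, 0 ≤ s → 0 ≤ ρ s := by
    intro s hs; have := hg0 s hs; simp only [hρ]; linarith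
  have hρle : ∀ s : ℝ, 0 ≤ s → ρ s ≤ α s := by
    intro s hs
    have := A s s hs le_rfl
    simp only [hρ, hh] at this ⊢; linarith
  have hρ00 : ρ 0 = 0 := by
    have h1 := hρ0 0 le_rfl
    have h2 := hρle 0 le_rfl
    rw [h0] at h2; linarith
  -- Lipschitz
  have hLip : ∀ s₁ s₂ : ℝ, 0 ≤ s₁ → 0 ≤ s₂ → |ρ s₁ - ρ s₂| ≤ |s₁ - s₂| := by
    have key : ∀ s₁ s₂ : ℝ, 0 ≤ s₁ → s₁ ≤ s₂ → |ρ s₁ - ρ s₂| ≤ |s₁ - s₂| := by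
      intro s₁ s₂ h1 h12
      have hC := C s₁ s₂ h1 h12
      have hD := D s₁ s₂ h1 h12
      rw [abs_sub_comm (ρ s₁), abs_sub_comm s₁,
        abs_of_nonneg (show (0:ℝ) ≤ ρ s₂ - ρ s₁ by simp only [hρ]; linarith),
        abs_of_nonneg (show (0:ℝ) ≤ s₂ - s₁ by linarith)]
      simp only [hρ]; linarith
    intro s₁ s₂ h1 h2
    rcases le_total s₁ s₂ with h12 | h12
    · exact key s₁ s₂ h1 h12
    · rw [abs_sub_comm, abs_sub_comm s₁ s₂]; exact key s₂ s₁ h2 h12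
  -- strict monotonicity
  have hρmono : StrictMonoOn ρ (Ici 0) := by
    intro s₁ h1 s₂ _ h12
    have := E s₁ s₂ h1 h12
    simp only [hρ]; linarith
  -- continuity on Ici 0
  have hρcont : ContinuousOn ρ (Ici 0) := by
    have : LipschitzOnWith 1 ρ (Ici 0) := by
      refine LipschitzOnWith.of_dist_le_mul fun x hx y hy => ?_
      rw [Real.dist_eq, Real.dist_eq, NNReal.coe_one, one_mul]
      exact hLip x y hx hy
    exact this.continuousOn
  -- lower bound for unboundedness
  have hlow : ∀ s : ℝ, 0 ≤ s → min (s / 2) (α (s / 2)) ≤ ρ s := by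
    intro s hs
    have hB : min (s / 2) (α (s / 2)) - s ≤ g s := by
      refine B s _ hs fun t ht hts => ?_
      rcases le_total t (s / 2) with htc | htc
      · have h1 : min (s / 2) (α (s / 2)) ≤ s / 2 := min_le_left _ _
        have := hpos t ht
        simp only [hh]; linarith
      · have h1 : min (s / 2) (α (s / 2)) ≤ α (s / 2) := min_le_right _ _
        have h2 : α (s / 2) ≤ α t := hmono.monotoneOn (show s / 2 ∈ Ici (0:ℝ) from by simp; linarith) (mem_Ici.mpr ht) htc
        simp only [hh]; linarith
    simp only [hρ]; linarith
  have hρunb : ∀ M : ℝ, ∃ r, 0 ≤ r ∧ M < ρ r := by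
    intro M
    obtain ⟨r₀, hr₀, hMr₀⟩ := hunb M
    refine ⟨2 * max r₀ (M + 1), by positivity, ?_⟩
    have hs : (0:ℝ) ≤ 2 * max r₀ (M + 1) := by
      have := le_max_left r₀ (M + 1); linarith
    have hlow' := hlow _ hs
    have he : 2 * max r₀ (M + 1) / 2 = max r₀ (M + 1) := by ring
    rw [he] at hlow'
    have h1 : M < max r₀ (M + 1) := lt_of_lt_of_le (by linarith) (le_max_right _ _)
    have h2 : α r₀ ≤ α (max r₀ (M + 1)) :=
      hmono.monotoneOn hr₀ (hr₀.trans (le_max_left _ _)) (le_max_left _ _)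
    have h3 : M < min (max r₀ (M + 1)) (α (max r₀ (M + 1))) :=
      lt_min h1 (by linarith)
    linarith
  exact ⟨ρ, ⟨⟨hρcont, hρmono, hρ00, hρ0⟩, hρunb⟩, hρle, hLip⟩
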